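/- Let F be a sparseness measure with cost function J on ℝⁿ, let 0 < q ≤ 1, and suppose that either lim_{x→0⁺} F(x)/x^q or lim_{x→∞} F(x)/x^q exists and is positive. Let k ≥ 1 and let ν be a linear subspace of ℝⁿ satisfying NSP at sparsity k for J. Then for every z ∈ ν with z ≠ 0 and every T ⊆ {1,…,n} with |T| ≤ k, one has ∑_{i∈T} |z_i|^q ≤ ∑_{i∉T} |z_i|^q. (Thus null spaces satisfying the exact recovery condition for J lie in the closure of those satisfying it for the ℓ_q cost function.) -/

import Mathlib

noncomputable section

/-- `F : ℝ → ℝ` is a sparseness measure: nonnegative on `[0,∞)`,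
vanishing exactly at `0`, and `F (|·|)` is subadditive on `ℝ`. -/
def SparsenessMeasure (F : ℝ → ℝ) : Prop :=
  (∀ t : ℝ, 0 ≤ t → 0 ≤ F t) ∧
  (∀ t : ℝ, 0 ≤ t → (F t = 0 ↔ t = 0)) ∧
  (∀ x y : ℝ, F |x + y| ≤ F |x| + F |y|)

/-- The cost function `J(x) = ∑ i, F |x i|` on `ℝⁿ`. -/
def costJ {n : ℕ} (F : ℝ → ℝ) (x : EuclideanSpace ℝ (Fin n)) : ℝ :=
  ∑ i, F |x i|

/-- The restricted cost `J(x_T) = ∑ i ∈ T, F |x i|`. -/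
def costJT {n : ℕ} (F : ℝ → ℝ) (T : Finset (Fin n)) (x : EuclideanSpace ℝ (Fin n)) : ℝ :=
  ∑ i ∈ T, F |x i|

/-- `x` has at most `k` nonzero entries. -/
def Sparse {n : ℕ} (k : ℕ) (x : EuclideanSpace ℝ (Fin n)) : Prop :=
  ∃ T : Finset (Fin n), T.card ≤ k ∧ ∀ i ∉ T, x i = 0

/-- The matrix `A` acting as a continuous linear map between Euclidean spaces. -/
def mulVecCLM {m n : ℕ} (A : Matrix (Fin m) (Fin n) ℝ) :
    EuclideanSpace ℝ (Fin n) →L[ℝ] EuclideanSpace ℝ (Fin m) :=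
  (((EuclideanSpace.equiv (Fin m) ℝ).symm : (Fin m → ℝ) →L[ℝ] EuclideanSpace ℝ (Fin m)).comp
    (Matrix.mulVecLin A).toContinuousLinearMap).comp
    ((EuclideanSpace.equiv (Fin n) ℝ) : EuclideanSpace ℝ (Fin n) →L[ℝ] (Fin n → ℝ))

/-- `A` satisfies the robust recovery condition at sparsity `k` for the cost `J_F`
with constant `C`: for every `k`-sparse `x̄`, every `ε > 0`, every noise `v` with
`‖v‖ ≤ ε`, and every feasible `x̂` with `J(x̂) ≤ J(x̄)`, one has `‖x̄ - x̂‖ ≤ C ε`. -/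
def RRC {m n : ℕ} (A : Matrix (Fin m) (Fin n) ℝ) (k : ℕ) (F : ℝ → ℝ) (C : ℝ) : Prop :=
  ∀ xbar : EuclideanSpace ℝ (Fin n), Sparse k xbar →
    ∀ ε : ℝ, 0 < ε →
      ∀ v : EuclideanSpace ℝ (Fin m), ‖v‖ ≤ ε →
        ∀ xhat : EuclideanSpace ℝ (Fin n),
          ‖mulVecCLM A xhat - (mulVecCLM A xbar + v)‖ ≤ ε →
            costJ F xhat ≤ costJ F xbar → ‖xbar - xhat‖ ≤ C * ε

/-- The robust null space condition with parameter `d` for `(A, k, J_F)`. -/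
def RNSP {m n : ℕ} (A : Matrix (Fin m) (Fin n) ℝ) (k : ℕ) (F : ℝ → ℝ) (d : ℝ) : Prop :=
  ∀ z ∈ LinearMap.ker (mulVecCLM A : EuclideanSpace ℝ (Fin n) →ₗ[ℝ] EuclideanSpace ℝ (Fin m)), z ≠ 0 →
    ∀ η : EuclideanSpace ℝ (Fin n), ‖η‖ < d * ‖z‖ →
      ∀ T : Finset (Fin n), T.card ≤ k →
        costJT F T (z + η) < costJT F Tᶜ (z + η)

/-- The subspace `ν` satisfies the null space property at sparsity `k` for `J_F`. -/
def NSP {n : ℕ} (ν : Submodule ℝ (EuclideanSpace ℝ (Fin n))) (k : ℕ) (F : ℝ → ℝ) : Prop :=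
  ∀ z ∈ ν, z ≠ 0 → ∀ T : Finset (Fin n), T.card ≤ k → costJT F T z < costJT F Tᶜ z

/-- The orthogonal projection onto `ν`, as a continuous linear map `ℝⁿ → ℝⁿ`. -/
def projCLM {n : ℕ} (ν : Submodule ℝ (EuclideanSpace ℝ (Fin n))) :
    EuclideanSpace ℝ (Fin n) →L[ℝ] EuclideanSpace ℝ (Fin n) :=
  ν.subtypeL.comp (Submodule.orthogonalProjectionOnto ν)

/-- Lemma in Appendix H: if `F` is a sparseness measure, `0 < q ≤ 1`,
and `F(x)/x^q` has a positive limit as `x → 0⁺` or as `x → ∞`, then every subspace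
satisfying NSP at sparsity `k` for `J_F` satisfies the closed `ℓ_q` null space
inequality: `∑_{i ∈ T} |z i|^q ≤ ∑_{i ∉ T} |z i|^q` for nonzero `z ∈ ν` and `|T| ≤ k`. -/
theorem stmt16 {n : ℕ} (F : ℝ → ℝ) (hF : SparsenessMeasure F)
    (q : ℝ) (hq0 : 0 < q) (hq1 : q ≤ 1)
    (hlim : (∃ L : ℝ, 0 < L ∧ Filter.Tendsto (fun x : ℝ => F x / x ^ q)
        (nhdsWithin 0 (Set.Ioi 0)) (nhds L)) ∨
      (∃ L : ℝ, 0 < L ∧ Filter.Tendsto (fun x : ℝ => F x / x ^ q)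
        Filter.atTop (nhds L)))
    (k : ℕ) (hk : 1 ≤ k)
    (ν : Submodule ℝ (EuclideanSpace ℝ (Fin n))) (hν : NSP ν k F) :
    ∀ z ∈ ν, z ≠ 0 → ∀ T : Finset (Fin n), T.card ≤ k →
      ∑ i ∈ T, |z i| ^ q ≤ ∑ i ∈ Tᶜ, |z i| ^ q := by
  have hF0 : F 0 = 0 := (hF.2.1 0 le_rfl).mpr rfl
  -- Extract a filter `l`, a positive limit `L`, eventual positivity, and the key convergence.
  obtain ⟨l, hne, L, hL, hpos, H⟩ :
      ∃ l : Filter ℝ, l.NeBot ∧ ∃ L : ℝ, 0 < L ∧ (∀ᶠ t in l, 0 < t) ∧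
        ∀ c : ℝ, 0 < c →
          Filter.Tendsto (fun t : ℝ => F (t * c) / t ^ q) l (nhds (L * c ^ q)) := by
    rcases hlim with ⟨L, hL, hlim⟩ | ⟨L, hL, hlim⟩
    · refine ⟨nhdsWithin 0 (Set.Ioi 0), by infer_instance, L, hL,
        eventually_nhdsWithin_of_forall (fun t ht => ht), fun c hc => ?_⟩
      have hmap : Filter.Tendsto (fun t : ℝ => t * c) (nhdsWithin 0 (Set.Ioi 0))
          (nhdsWithin 0 (Set.Ioi 0)) := by
        apply tendsto_nhdsWithin_of_tendsto_nhds_of_eventually_within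
        · have h0 : Filter.Tendsto (fun t : ℝ => t * c) (nhds 0) (nhds (0 * c)) :=
            Filter.Tendsto.mul_const c (continuous_id.tendsto 0)
          simpa using h0.mono_left nhdsWithin_le_nhds
        · exact eventually_nhdsWithin_of_forall fun t ht => mul_pos ht hc
      have h1 : Filter.Tendsto (fun t : ℝ => F (t * c) / (t * c) ^ q * c ^ q)
          (nhdsWithin 0 (Set.Ioi 0)) (nhds (L * c ^ q)) :=
        (hlim.comp hmap).mul_const _
      refine h1.congr' ?_
      filter_upwards [eventually_nhdsWithin_of_forall
        (fun t (ht : t ∈ Set.Ioi (0:ℝ)) => ht)] with t ht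
      rw [Real.mul_rpow ht.le hc.le, ← div_div,
        div_mul_cancel₀ _ (Real.rpow_pos_of_pos hc q).ne']
    · refine ⟨Filter.atTop, by infer_instance, L, hL,
        Filter.eventually_gt_atTop 0, fun c hc => ?_⟩
      have hmap : Filter.Tendsto (fun t : ℝ => t * c) Filter.atTop Filter.atTop :=
        Filter.Tendsto.atTop_mul_const hc Filter.tendsto_id
      have h1 : Filter.Tendsto (fun t : ℝ => F (t * c) / (t * c) ^ q * c ^ q)
          Filter.atTop (nhds (L * c ^ q)) := (hlim.comp hmap).mul_const _
      refine h1.congr' ?_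
      filter_upwards [Filter.eventually_gt_atTop (0:ℝ)] with t ht
      rw [Real.mul_rpow ht.le hc.le, ← div_div,
        div_mul_cancel₀ _ (Real.rpow_pos_of_pos hc q).ne']
  haveI := hne
  intro z hz hz0 T hT
  -- key limit for sums
  have key : ∀ S : Finset (Fin n),
      Filter.Tendsto (fun t : ℝ => (∑ i ∈ S, F |t * z i|) / t ^ q) l
        (nhds (L * ∑ i ∈ S, |z i| ^ q)) := by
    intro S
    have : Filter.Tendsto (fun t : ℝ => ∑ i ∈ S, F |t * z i| / t ^ q) l
        (nhds (∑ i ∈ S, L * |z i| ^ q)) := by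
      refine tendsto_finset_sum _ fun i _ => ?_
      by_cases h : z i = 0
      · simp only [h, mul_zero, abs_zero, hF0, zero_div, Real.zero_rpow hq0.ne']
        simpa using (tendsto_const_nhds : Filter.Tendsto (fun _ : ℝ => (0:ℝ)) l (nhds 0))
      · have hc : 0 < |z i| := abs_pos.mpr h
        refine (H _ hc).congr' ?_
        filter_upwards [hpos] with t ht
        rw [abs_mul, abs_of_pos ht]
    simpa [Finset.sum_div, Finset.mul_sum] using this
  have hle : ∀ᶠ t in l, (∑ i ∈ T, F |t * z i|) / t ^ q ≤
      (∑ i ∈ Tᶜ, F |t * z i|) / t ^ q := by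
    filter_upwards [hpos] with t ht
    have hmem : t • z ∈ ν := ν.smul_mem t hz
    have hne0 : t • z ≠ 0 := smul_ne_zero ht.ne' hz0
    have := hν (t • z) hmem hne0 T hT
    have hlt : (∑ i ∈ T, F |t * z i|) < ∑ i ∈ Tᶜ, F |t * z i| := by
      have e : ∀ i, (t • z) i = t * z i := fun i => rfl
      simpa [costJT, e] using this
    exact (div_le_div_iff_of_pos_right (Real.rpow_pos_of_pos ht q)).mpr hlt.le
  have hfinal : L * ∑ i ∈ T, |z i| ^ q ≤ L * ∑ i ∈ Tᶜ, |z i| ^ q :=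
    le_of_tendsto_of_tendsto (key T) (key Tᶜ) hle
  exact le_of_mul_le_mul_left hfinal hL
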